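/- arXiv:math/0210033 — 4 statements merged into one kernel-verified Lean document; each statement's English description precedes it below -/
import Mathlib

section
/- A matrix M in SL(2,Z) is conjugate in SL(2,Z) to [[1,1],[0,1]] if and only if M = A_{(a,b)} = [[1-ab, a^2], [-b^2, 1+ab]] for some integers a, b with gcd(a,b)=1. -/
/-- The monodromy matrix `A_{(a,b)}`. -/
def Aab (a b : ℤ) : Matrix (Fin 2) (Fin 2) ℤ :=
  !![1 - a * b, a ^ 2; -b ^ 2, 1 + a * b]

/-- The standard positive Dehn twist matrix `[[1,1],[0,1]]` in `SL(2,ℤ)`. -/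
def Tmat : Matrix.SpecialLinearGroup (Fin 2) ℤ :=
  ⟨!![1, 1; 0, 1], by norm_num [Matrix.det_fin_two_of]⟩

lemma conj_formula (P : Matrix.SpecialLinearGroup (Fin 2) ℤ) :
    ((P * Tmat * P⁻¹ : Matrix.SpecialLinearGroup (Fin 2) ℤ) : Matrix (Fin 2) (Fin 2) ℤ) =
      Aab (P.1 0 0) (P.1 1 0) := by
  have hdet : P.1 0 0 * P.1 1 1 - P.1 0 1 * P.1 1 0 = 1 := by
    have := P.2; rwa [Matrix.det_fin_two] at this
  have hPmat : P.1 = !![P.1 0 0, P.1 0 1; P.1 1 0, P.1 1 1] := by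
    ext i j; fin_cases i <;> fin_cases j <;> rfl
  have hinv : ((P⁻¹ : Matrix.SpecialLinearGroup (Fin 2) ℤ) : Matrix (Fin 2) (Fin 2) ℤ)
      = !![P.1 1 1, -P.1 0 1; -P.1 1 0, P.1 0 0] := by
    rw [Matrix.SpecialLinearGroup.coe_inv, hPmat, Matrix.adjugate_fin_two]
  show P.1 * Tmat.1 * _ = _
  rw [hinv, hPmat]
  show (!![P.1 0 0, P.1 0 1; P.1 1 0, P.1 1 1] * !![1,1;0,1]) * _ = _
  ext i j
  fin_cases i <;> fin_cases j <;>
    simp [Matrix.mul_apply, Fin.sum_univ_two, Aab] <;> nlinarith [hdet]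

theorem stmt2 (M : Matrix.SpecialLinearGroup (Fin 2) ℤ) :
    (∃ P : Matrix.SpecialLinearGroup (Fin 2) ℤ, M = P * Tmat * P⁻¹) ↔
      ∃ a b : ℤ, Int.gcd a b = 1 ∧ (M : Matrix (Fin 2) (Fin 2) ℤ) = Aab a b := by
  constructor
  · rintro ⟨P, rfl⟩
    refine ⟨P.1 0 0, P.1 1 0, ?_, conj_formula P⟩
    have hdet : P.1 0 0 * P.1 1 1 - P.1 0 1 * P.1 1 0 = 1 := by
      have := P.2; rwa [Matrix.det_fin_two] at this
    have h : (Int.gcd (P.1 0 0) (P.1 1 0) : ℤ) ∣ P.1 0 0 * P.1 1 1 - P.1 0 1 * P.1 1 0 :=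
      dvd_sub (Dvd.dvd.mul_right (Int.gcd_dvd_left _ _) _)
        (Dvd.dvd.mul_left (Int.gcd_dvd_right _ _) _)
    rw [hdet] at h
    exact Nat.dvd_one.mp (Int.ofNat_dvd.mp (by exact_mod_cast h))
  · rintro ⟨a, b, hg, hM⟩
    obtain ⟨u, v, huv⟩ : ∃ u v : ℤ, a * u + b * v = 1 := by
      refine ⟨Int.gcdA a b, Int.gcdB a b, ?_⟩
      have := Int.gcd_eq_gcd_ab a b
      rw [hg] at this; push_cast at this; linarith
    have hdet : (!![a, -v; b, u] : Matrix (Fin 2) (Fin 2) ℤ).det = 1 := by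
      rw [Matrix.det_fin_two_of]; linarith
    set P : Matrix.SpecialLinearGroup (Fin 2) ℤ := ⟨_, hdet⟩
    refine ⟨P, ?_⟩
    apply Subtype.ext
    rw [conj_formula P, hM]
    rfl
end

section
/- Let (a,b) and (a',b') be primitive integer vectors (gcd(a,b) = gcd(a',b') = 1) and let k, k' be positive integers. If A_{(a,b)}^k = A_{(a',b')}^{k'}, then k = k' and (a',b') = (a,b) or (a',b') = (-a,-b). -/
lemma Aab_pow (a b : ℤ) (k : ℕ) :
    Aab a b ^ k = !![1 - k * a * b, k * a ^ 2; -(k * b ^ 2), 1 + k * a * b] := by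
  induction k with
  | zero => simp [Matrix.one_fin_two]
  | succ n ih =>
      rw [pow_succ, ih, Aab]
      push_cast
      ext i j
      fin_cases i <;> fin_cases j <;>
        simp [Matrix.mul_apply, Fin.sum_univ_two] <;> ring

lemma coprime_dvd_aux (x y m : ℤ) (n : ℤ) (hxy : IsCoprime x y)
    (h1 : n ∣ m * x) (h2 : n ∣ m * y) : n ∣ m := by
  obtain ⟨u, v, huv⟩ := hxy
  have : m = u * (m * x) + v * (m * y) := by
    have := congrArg (m * ·) huv
    simp at this
    linarith [this]
  rw [this]
  exact dvd_add (Dvd.dvd.mul_left h1 u) (Dvd.dvd.mul_left h2 v)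

theorem stmt3 (a b a' b' : ℤ) (hab : Int.gcd a b = 1) (hab' : Int.gcd a' b' = 1)
    (k k' : ℕ) (hk : 0 < k) (hk' : 0 < k')
    (h : Aab a b ^ k = Aab a' b' ^ k') :
    k = k' ∧ ((a' = a ∧ b' = b) ∨ (a' = -a ∧ b' = -b)) := by
  rw [Aab_pow, Aab_pow] at h
  have e01 : (k : ℤ) * a ^ 2 = (k' : ℤ) * a' ^ 2 := by
    have := congrFun (congrFun h 0) 1; simpa using this
  have e10 : (k : ℤ) * b ^ 2 = (k' : ℤ) * b' ^ 2 := by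
    have := congrFun (congrFun h 1) 0; simpa using this
  have e00 : (k : ℤ) * a * b = (k' : ℤ) * a' * b' := by
    have := congrFun (congrFun h 0) 0; simpa using this
  have hc : IsCoprime a b := Int.isCoprime_iff_gcd_eq_one.mpr hab
  have hc' : IsCoprime a' b' := Int.isCoprime_iff_gcd_eq_one.mpr hab'
  have hc2 : IsCoprime (a ^ 2) (b ^ 2) := (hc.pow (n := 2) (m := 2))
  have hc2' : IsCoprime (a' ^ 2) (b' ^ 2) := (hc'.pow (n := 2) (m := 2))
  have hd1 : (k' : ℤ) ∣ (k : ℤ) := by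
    apply coprime_dvd_aux (a ^ 2) (b ^ 2) _ _ hc2
    · exact ⟨a' ^ 2, e01⟩
    · exact ⟨b' ^ 2, e10⟩
  have hd2 : (k : ℤ) ∣ (k' : ℤ) := by
    apply coprime_dvd_aux (a' ^ 2) (b' ^ 2) _ _ hc2'
    · exact ⟨a ^ 2, e01.symm⟩
    · exact ⟨b ^ 2, e10.symm⟩
  have hkk : (k : ℤ) = (k' : ℤ) := by
    have := Int.dvd_antisymm (by positivity) (by positivity) hd2 hd1
    omega
  have hkeq : k = k' := by exact_mod_cast hkk
  refine ⟨hkeq, ?_⟩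
  have hkne : (k : ℤ) ≠ 0 := by positivity
  rw [← hkk] at e01 e10 e00
  have ha2 : a ^ 2 = a' ^ 2 := by
    have := mul_left_cancel₀ hkne e01; linarith
  have hb2 : b ^ 2 = b' ^ 2 := by
    have := mul_left_cancel₀ hkne e10; linarith
  have hab2 : a * b = a' * b' := by
    have : (k : ℤ) * (a * b) = (k : ℤ) * (a' * b') := by ring_nf; ring_nf at e00; linarith
    exact mul_left_cancel₀ hkne this
  have ha : a' = a ∨ a' = -a := by
    have : (a' - a) * (a' + a) = 0 := by nlinarith [ha2]
    rcases mul_eq_zero.mp this with h | h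
    · left; linarith
    · right; linarith
  have hb : b' = b ∨ b' = -b := by
    have : (b' - b) * (b' + b) = 0 := by nlinarith [hb2]
    rcases mul_eq_zero.mp this with h | h
    · left; linarith
    · right; linarith
  rcases ha with ha | ha <;> rcases hb with hb | hb
  · exact Or.inl ⟨ha, hb⟩
  · -- a' = a, b' = -b : then a*b = -a*b so a*b = 0
    subst ha hb
    have hz : a' * b = 0 := by nlinarith [hab2]
    rcases mul_eq_zero.mp hz with h0 | h0
    · exact Or.inr ⟨by rw [h0]; ring, rfl⟩
    · exact Or.inl ⟨rfl, by rw [h0]; ring⟩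
  · subst ha hb
    have hz : a * b' = 0 := by nlinarith [hab2]
    rcases mul_eq_zero.mp hz with h0 | h0
    · exact Or.inl ⟨by rw [h0]; ring, rfl⟩
    · exact Or.inr ⟨rfl, by rw [h0]; ring⟩
  · exact Or.inr ⟨ha, hb⟩
end

section
/- Let n ≥ 1 and let m, m' be integers with gcd(n,m) = 1. There exists a matrix A in GL(2,Z) with det A = -1 such that A(n,m) = (0,1) and A(0,1) = (n,m') if and only if m·m' ≡ 1 (mod n). -/
theorem stmt6 (n m m' : ℤ) (hn : 1 ≤ n) (hgcd : Int.gcd n m = 1) :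
    (∃ A : Matrix (Fin 2) (Fin 2) ℤ,
        A.det = -1 ∧
        A.mulVec ![n, m] = ![0, 1] ∧
        A.mulVec ![0, 1] = ![n, m']) ↔
      m * m' ≡ 1 [ZMOD n] := by
  constructor
  · rintro ⟨A, hdet, h1, h2⟩
    have e1 : A 1 0 * n + A 1 1 * m = 1 := by
      have := congrFun h1 1
      simpa [Matrix.mulVec, dotProduct, Fin.sum_univ_two] using this
    have e2 : A 1 1 = m' := by
      have := congrFun h2 1
      simpa [Matrix.mulVec, dotProduct, Fin.sum_univ_two] using this
    refine Int.modEq_iff_dvd.mpr ⟨A 1 0, ?_⟩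
    linear_combination -e1 + m * e2
  · intro h
    obtain ⟨k, hk⟩ := (Int.modEq_iff_dvd.mp h.symm)
    refine ⟨!![-m, n; -k, m'], ?_, ?_, ?_⟩
    · simp [Matrix.det_fin_two]
      linarith [hk]
    · funext i
      fin_cases i <;>
        simp [Matrix.mulVec, dotProduct, Fin.sum_univ_two] <;> linarith [hk]
    · funext i
      fin_cases i <;>
        simp [Matrix.mulVec, dotProduct, Fin.sum_univ_two]
end

section
/- Suppose M_1, M_2, ..., M_N are matrices in SL(2,Z), each conjugate in SL(2,Z) to [[1,1],[0,1]], and their product M_1 · M_2 · ... · M_N equals the identity matrix. Then N is divisible by 12. -/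
open Matrix

def table3 : List (ZMod 3) := [ 0, 0, 0, 0, 0, 0, 0, 0, 0, 0, 0, 0, 0, 0, 0, 0, 2, 1, 0, 0, 0, 0, 1, 2, 0, 0, 0, 0, 0, 0, 0, 2, 0, 0, 1, 0, 0, 1, 0, 0, 0, 0, 2, 0, 0, 0, 2, 0, 1, 0, 0, 0, 0, 0, 0, 0, 0, 0, 0, 1, 0, 0, 2, 0, 0, 2, 0, 0, 0, 1, 0, 0, 0, 0, 1, 2, 0, 0, 0, 0, 0 ]
def table4 : List (ZMod 4) := [ 0, 0, 0, 0, 0, 0, 0, 0, 0, 0, 0, 0, 0, 0, 0, 0, 0, 0, 0, 0, 0, 0, 0, 0, 0, 0, 0, 0, 3, 2, 1, 0, 0, 0, 0, 0, 0, 0, 0, 0, 0, 0, 0, 0, 0, 0, 0, 0, 0, 0, 0, 0, 1, 2, 3, 0, 0, 0, 0, 0, 0, 0, 0, 0, 0, 0, 0, 0, 0, 3, 0, 0, 0, 2, 0, 0, 0, 1, 0, 0, 0, 1, 0, 0, 0, 0, 0, 0, 0, 0, 0, 3, 2, 0, 0, 0, 0, 2, 0, 0, 0, 0, 0, 1, 0,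 0, 0, 0, 0, 0, 0, 3, 0, 3, 0, 0, 2, 0, 0, 0, 0, 0, 0, 1, 0, 0, 0, 0, 0, 0, 0, 0, 0, 0, 0, 0, 0, 0, 0, 0, 0, 0, 0, 0, 0, 0, 0, 0, 0, 0, 0, 2, 0, 0, 0, 0, 1, 0, 3, 0, 0, 0, 0, 0, 0, 0, 0, 0, 0, 0, 0, 0, 0, 0, 0, 0, 0, 0, 0, 0, 3, 0, 1, 0, 0, 0, 0, 0, 0, 0, 0, 2, 0, 0, 0, 2, 0, 0, 0, 3, 0, 0, 0, 0, 0, 0, 0, 1, 0, 0, 0, 1, 0, 0, 2, 0, 0, 3, 0, 0, 0, 0, 0, 0, 0, 0, 0, 0, 0, 1, 0, 0, 0, 0, 0, 2, 0, 3, 0, 0, 0, 0, 0, 3, 0, 0, 0, 0, 0, 1, 0, 0, 0, 0, 2, 0 ]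

/-- Abelianization-style map `SL(2, ℤ/3) → ℤ/3` given by a lookup table. -/
def f3 (A : Matrix.SpecialLinearGroup (Fin 2) (ZMod 3)) : ZMod 3 :=
  table3.getD ((((A.1 0 0).val * 3 + (A.1 0 1).val) * 3 + (A.1 1 0).val) * 3 + (A.1 1 1).val) 0

/-- Abelianization-style map `SL(2, ℤ/4) → ℤ/4` given by a lookup table. -/
def f4 (A : Matrix.SpecialLinearGroup (Fin 2) (ZMod 4)) : ZMod 4 :=
  table4.getD ((((A.1 0 0).val * 4 + (A.1 0 1).val) * 4 + (A.1 1 0).val) * 4 + (A.1 1 1).val) 0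

lemma f3_mul : ∀ A B : Matrix.SpecialLinearGroup (Fin 2) (ZMod 3),
    f3 (A * B) = f3 A + f3 B := by decide

lemma f4_mul : ∀ A B : Matrix.SpecialLinearGroup (Fin 2) (ZMod 4),
    f4 (A * B) = f4 A + f4 B := by decide

section Generic

variable {n : ℕ} [NeZero n] (f : Matrix.SpecialLinearGroup (Fin 2) (ZMod n) → ZMod n)
  (hf : ∀ A B, f (A * B) = f A + f B)

/-- The composition with reduction mod `n`. -/
def g (n : ℕ) [NeZero n] (f : Matrix.SpecialLinearGroup (Fin 2) (ZMod n) → ZMod n)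
    (A : Matrix.SpecialLinearGroup (Fin 2) ℤ) : ZMod n :=
  f (Matrix.SpecialLinearGroup.map (Int.castRingHom (ZMod n)) A)

include hf

lemma g_mul (A B : Matrix.SpecialLinearGroup (Fin 2) ℤ) :
    g n f (A * B) = g n f A + g n f B := by
  simp only [g, _root_.map_mul, hf]

lemma g_one : g n f 1 = 0 := by
  have h := g_mul f hf 1 1
  simpa using h.symm

lemma g_conj (P A : Matrix.SpecialLinearGroup (Fin 2) ℤ) :
    g n f (P * A * P⁻¹) = g n f A := by
  have h1 : g n f (P * P⁻¹) = g n f P + g n f P⁻¹ := g_mul f hf _ _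
  rw [mul_inv_cancel, g_one f hf] at h1
  rw [g_mul f hf, g_mul f hf]
  have : g n f P + g n f A + g n f P⁻¹ = g n f A + (g n f P + g n f P⁻¹) := by ring
  rw [this, ← h1]
  simp

lemma key (N : ℕ) (M : Fin N → Matrix.SpecialLinearGroup (Fin 2) ℤ)
    (hconj : ∀ i, ∃ P : Matrix.SpecialLinearGroup (Fin 2) ℤ, M i = P * Tmat * P⁻¹)
    (hprod : (List.ofFn M).prod = 1) (hT : g n f Tmat = 1) :
    (N : ZMod n) = 0 := by
  have hlist : ∀ (L : List (Matrix.SpecialLinearGroup (Fin 2) ℤ)),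
      g n f L.prod = (L.map (g n f)).sum := by
    intro L
    induction L with
    | nil => simpa using g_one f hf
    | cons a t ih => simp [List.prod_cons, g_mul f hf, ih]
  have h1 : g n f (List.ofFn M).prod = (N : ZMod n) := by
    rw [hlist]
    have hmap : (List.ofFn M).map (g n f) = List.ofFn (fun i => g n f (M i)) := by
      rw [List.map_ofFn]; rfl
    rw [hmap]
    have : (fun i : Fin N => g n f (M i)) = fun _ => (1 : ZMod n) := by
      funext i
      obtain ⟨P, hP⟩ := hconj i
      rw [hP, g_conj f hf, hT]
    rw [this]
    simp [List.sum_ofFn]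
  rw [hprod, g_one f hf] at h1
  exact h1.symm

end Generic

lemma f3_T : g 3 f3 Tmat = 1 := by decide
lemma f4_T : g 4 f4 Tmat = 1 := by decide

theorem stmt14 (N : ℕ) (M : Fin N → Matrix.SpecialLinearGroup (Fin 2) ℤ)
    (hconj : ∀ i, ∃ P : Matrix.SpecialLinearGroup (Fin 2) ℤ, M i = P * Tmat * P⁻¹)
    (hprod : (List.ofFn M).prod = 1) :
    12 ∣ N := by
  have h3 : (3 : ℕ) ∣ N := by
    have := key f3 f3_mul N M hconj hprod f3_T
    exact (ZMod.natCast_eq_zero_iff N 3).mp this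
  have h4 : (4 : ℕ) ∣ N := by
    have := key f4 f4_mul N M hconj hprod f4_T
    exact (ZMod.natCast_eq_zero_iff N 4).mp this
  have : Nat.Coprime 3 4 := by norm_num
  exact (Nat.Coprime.mul_dvd_of_dvd_of_dvd this h3 h4 : (3*4 : ℕ) ∣ N)
end
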